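/- Suppose for a fixed n ≥ 2 that −v_n·log(v_n/(2π²)^n) ≤ 2c_n, where v_n = 2n^{n-1}/(n-1)! and c_n = ((n+1)^n/n!)·((n+1)∑_{k=1}^n 1/k − n + log(π^n/n!)) satisfies c_n > 0 for all n. Then, for n ≥ 4, the quantity 2c_{n+1} − (−v_{n+1}·log(v_{n+1}/(2π²)^{n+1})) is strictly positive, given the numerical inequality (2/e_4)(log e_4 − log(2π²)) + log π + γ > 0 with e_4 = (5/4)^4 and γ the Euler–Mascheroni constant. -/

import Mathlib

open Real Finset

/-- `c n` is the normalized height `2 vol̂_χ(-K_{P^n_ℤ})` of projective `n`-space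
with the volume-normalized Fubini–Study metric. -/
noncomputable def heightPn (n : ℕ) : ℝ :=
  (((n : ℝ) + 1) ^ n / (Nat.factorial n : ℝ)) *
    (((n : ℝ) + 1) * (∑ k ∈ Finset.Icc 1 n, (1 : ℝ) / k) - n +
      Real.log (π ^ n / (Nat.factorial n : ℝ)))

/-- `v n` is the anticanonical volume of `P^{n-1} × P^1`. -/
noncomputable def volPP (n : ℕ) : ℝ := 2 * (n : ℝ) ^ (n - 1) / (Nat.factorial (n - 1) : ℝ)

noncomputable def eseq (n : ℕ) : ℝ := (((n : ℝ) + 1) / n) ^ n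

noncomputable def hA (n : ℕ) : ℝ :=
  ((n : ℝ) + 1) * (∑ k ∈ Finset.Icc 1 n, (1 : ℝ) / k) - n +
    Real.log (π ^ n / (Nat.factorial n : ℝ))

lemma eseq_pos {n : ℕ} (hn : 1 ≤ n) : 0 < eseq n := by
  have : (0:ℝ) < n := by exact_mod_cast hn
  unfold eseq; positivity

lemma eseq_le_succ {n : ℕ} (hn : 1 ≤ n) : eseq n ≤ eseq (n + 1) := by
  have hx : (1:ℝ) ≤ (n:ℝ) := by exact_mod_cast hn
  set x : ℝ := (n:ℝ) with hxdef
  have hx0 : (0:ℝ) < x := by linarith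
  have hx1 : (0:ℝ) < x + 1 := by linarith
  have hB := one_add_mul_le_pow (a := -(1/(x+1)^2)) (by
    have h2 : (1:ℝ) ≤ (x+1)^2 := by nlinarith
    have : 1/(x+1)^2 ≤ 1 := by rw [div_le_one (by positivity)]; exact h2
    linarith) (n+1)
  have hL : 1 + ((n:ℝ)+1) * -(1/(x+1)^2) = x/(x+1) := by
    field_simp
    ring
  have hR : (1 + -(1/(x+1)^2)) = (x/(x+1)) * ((x+2)/(x+1)) := by
    field_simp
    ring
  rw [show ((n+1 : ℕ) : ℝ) = (n:ℝ)+1 by push_cast; ring] at hB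
  rw [hL, hR, mul_pow] at hB
  have hkey := mul_le_mul_of_nonneg_left hB (le_of_lt (pow_pos (div_pos hx1 hx0) (n+1)))
  have h1 : ((x+1)/x) * (x/(x+1)) = 1 := by field_simp
  have e1 : ((x+1)/x)^(n+1) * (x/(x+1)) = ((x+1)/x)^n := by
    rw [pow_succ, mul_assoc, h1, mul_one]
  have e2 : ((x+1)/x)^(n+1) * ((x/(x+1))^(n+1) * ((x+2)/(x+1))^(n+1)) = ((x+2)/(x+1))^(n+1) := by
    rw [← mul_assoc, ← mul_pow, h1, one_pow, one_mul]
  rw [e1, e2] at hkey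
  have he1 : eseq n = ((x+1)/x)^n := rfl
  have he2 : eseq (n+1) = ((x+2)/(x+1))^(n+1) := by
    unfold eseq; push_cast; rw [hxdef]; ring_nf
  rw [he1, he2]; exact hkey

lemma eseq_mono {a b : ℕ} (ha : 1 ≤ a) (hab : a ≤ b) : eseq a ≤ eseq b := by
  induction b, hab using Nat.le_induction with
  | base => exact le_refl _
  | succ m hm ih => exact ih.trans (eseq_le_succ (le_trans ha hm))

lemma gamma_lt_sum (n : ℕ) (hn : 1 ≤ n) :
    Real.eulerMascheroniConstant < (∑ k ∈ Finset.Icc 1 n, (1:ℝ)/k) - Real.log n := by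
  have h := Real.eulerMascheroniConstant_lt_eulerMascheroniSeq' n
  rw [Real.eulerMascheroniSeq', if_neg (by omega)] at h
  have hcast : ((harmonic n : ℚ) : ℝ) = ∑ k ∈ Finset.Icc 1 n, (1:ℝ)/k := by
    rw [harmonic_eq_sum_Icc]
    push_cast
    simp [one_div]
  rwa [hcast] at h

lemma volPP_succ (n : ℕ) : volPP (n+1) = 2 * ((n:ℝ)+1)^n / (Nat.factorial n : ℝ) := by
  unfold volPP
  push_cast
  norm_num

lemma volPP_succ_pos (n : ℕ) : 0 < volPP (n+1) := by
  rw [volPP_succ]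
  have : (0:ℝ) < Nat.factorial n := by exact_mod_cast Nat.factorial_pos n
  positivity

lemma two_heightPn (n : ℕ) : 2 * heightPn n = volPP (n+1) * hA n := by
  rw [volPP_succ]; unfold heightPn hA; ring

lemma volPP_ratio {n : ℕ} (hn : 1 ≤ n) : volPP (n+1) = eseq n * volPP n := by
  obtain ⟨m, rfl⟩ : ∃ m, n = m + 1 := ⟨n - 1, by omega⟩
  rw [volPP_succ, volPP_succ]
  unfold eseq
  have hf : (0:ℝ) < Nat.factorial m := by exact_mod_cast Nat.factorial_pos m
  have h1 : (0:ℝ) < (m:ℝ) + 1 := by positivity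
  rw [Nat.factorial_succ]
  push_cast
  rw [div_pow]
  field_simp
  ring

lemma hA_succ (n : ℕ) : hA (n+1) = hA n + ((∑ k ∈ Finset.Icc 1 (n+1), (1:ℝ)/k)
    - Real.log ((n:ℝ)+1)) + Real.log π := by
  have hf : (0:ℝ) < Nat.factorial n := by exact_mod_cast Nat.factorial_pos n
  have h1 : (0:ℝ) < (n:ℝ) + 1 := by positivity
  have hsum : ∑ k ∈ Finset.Icc 1 (n+1), (1:ℝ)/k
      = (∑ k ∈ Finset.Icc 1 n, (1:ℝ)/k) + 1/((n:ℝ)+1) := by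
    rw [Finset.sum_Icc_succ_top (by omega)]
    push_cast
    ring
  have hlog : Real.log (π^(n+1) / (Nat.factorial (n+1) : ℝ))
      = Real.log (π^n / (Nat.factorial n : ℝ)) + Real.log π - Real.log ((n:ℝ)+1) := by
    have : (π:ℝ)^(n+1) / (Nat.factorial (n+1) : ℝ)
        = (π^n / (Nat.factorial n : ℝ)) * (π / ((n:ℝ)+1)) := by
      rw [Nat.factorial_succ]
      push_cast
      rw [pow_succ]
      field_simp
    rw [this, Real.log_mul (by positivity) (by positivity),
      Real.log_div Real.pi_ne_zero (ne_of_gt h1)]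
    ring
  unfold hA
  push_cast
  rw [hsum, hlog]
  field_simp
  ring


lemma key_arith (E e e4 S T Ln l P G q f : ℝ)
    (hEpos : 0 < E) (hS : 0 < S) (he4pos : 0 < e4)
    (he4E : e4 ≤ E) (heE : e ≤ E)
    (hfl : f ≤ l) (hfq : f ≤ q)
    (hind2 : -Ln ≤ e * S)
    (hTgt : S + G + P < T)
    (hnum : 0 < 2 / e4 * (f - q) + P + G) :
    0 < E * T + (Ln + l - q) := by
  have hr : (0:ℝ) ≤ 2 / e4 := by positivity
  have h2 : e4 * (2 / e4) = 2 := by field_simp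
  have hco : 1 ≤ E * (2 / e4) := by nlinarith [mul_nonneg (sub_nonneg.mpr he4E) hr]
  have c5 : E * (2 / e4) * (f - q) ≤ f - q := by
    nlinarith [mul_nonneg (sub_nonneg.mpr hco) (sub_nonneg.mpr hfq)]
  have c4 : E * (S + G + P) < E * T := mul_lt_mul_of_pos_left hTgt hEpos
  have c1 : e * S ≤ E * S := mul_le_mul_of_nonneg_right heE hS.le
  have c6 : 0 < E * (2 / e4 * (f - q) + P + G) := mul_pos hEpos hnum
  nlinarith [c1, c4, c5, c6, hind2, hfl]

theorem stmt_17 (n : ℕ) (hn : 4 ≤ n)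
    (hcpos : ∀ m : ℕ, 1 ≤ m → 0 < heightPn m)
    (hind : -(volPP n) * Real.log (volPP n / (2 * π ^ 2) ^ n) ≤ 2 * heightPn n)
    (hnum : 0 < (2 / ((5 / 4 : ℝ) ^ 4)) *
        (Real.log ((5 / 4 : ℝ) ^ 4) - Real.log (2 * π ^ 2)) + Real.log π +
        Real.eulerMascheroniConstant) :
    0 < 2 * heightPn (n + 1) -
        (-(volPP (n + 1)) * Real.log (volPP (n + 1) / (2 * π ^ 2) ^ (n + 1))) := by

  have hn1 : 1 ≤ n := by omega
  have hv1 : 0 < volPP n := by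
    obtain ⟨m, hm⟩ : ∃ m, n = m + 1 := ⟨n - 1, by omega⟩
    rw [hm]; exact volPP_succ_pos m
  have hv2 : 0 < volPP (n+1) := volPP_succ_pos n
  have hepos : 0 < eseq n := eseq_pos hn1
  have hEpos : 0 < eseq (n+1) := eseq_pos (by omega)
  have he4pos : 0 < eseq 4 := eseq_pos (by norm_num)
  have hr1 : volPP (n+1) = eseq n * volPP n := volPP_ratio hn1
  have hr2 : volPP (n+1+1) = eseq (n+1) * volPP (n+1) := volPP_ratio (by omega)
  have hS : 0 < hA n := by
    have hh := hcpos n hn1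
    have h2 := two_heightPn n
    nlinarith [hv2]
  have h2pi : (0:ℝ) < 2 * π^2 := by positivity
  have hLsucc : Real.log (volPP (n+1) / (2*π^2)^(n+1))
      = Real.log (volPP n / (2*π^2)^n) + Real.log (eseq n) - Real.log (2*π^2) := by
    rw [Real.log_div (ne_of_gt hv2) (by positivity),
        Real.log_div (ne_of_gt hv1) (by positivity),
        Real.log_pow, Real.log_pow, hr1,
        Real.log_mul (ne_of_gt hepos) (ne_of_gt hv1)]
    push_cast
    ring
  have hgam := gamma_lt_sum (n+1) (by omega)
  push_cast at hgam
  have hTgt : hA n + Real.eulerMascheroniConstant + Real.log π < hA (n+1) := by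
    rw [hA_succ]
    linarith
  have he4n : eseq 4 ≤ eseq n := eseq_mono (by norm_num) hn
  have he4E : eseq 4 ≤ eseq (n+1) := eseq_mono (by norm_num) (by omega)
  have heE : eseq n ≤ eseq (n+1) := eseq_le_succ hn1
  have hlogmono : Real.log (eseq 4) ≤ Real.log (eseq n) := Real.log_le_log he4pos he4n
  have he4val : eseq 4 = (5/4 : ℝ)^4 := by norm_num [eseq]
  have he4le : eseq 4 ≤ 2*π^2 := by
    rw [he4val]
    nlinarith [Real.pi_gt_three]
  have hfq : Real.log (eseq 4) ≤ Real.log (2*π^2) := Real.log_le_log he4pos he4le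
  rw [← he4val] at hnum
  have hind2 : -(Real.log (volPP n / (2*π^2)^n)) ≤ eseq n * hA n := by
    rw [two_heightPn, hr1] at hind
    nlinarith [hv1]
  have key : 0 < eseq (n+1) * hA (n+1) +
      (Real.log (volPP n / (2*π^2)^n) + Real.log (eseq n) - Real.log (2*π^2)) :=
    key_arith (eseq (n+1)) (eseq n) (eseq 4) (hA n) (hA (n+1))
      (Real.log (volPP n / (2*π^2)^n)) (Real.log (eseq n)) (Real.log π)
      Real.eulerMascheroniConstant (Real.log (2*π^2)) (Real.log (eseq 4))
      hEpos hS he4pos he4E heE hlogmono hfq hind2 hTgt hnum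
  rw [two_heightPn, hr2, hLsucc]
  nlinarith [mul_pos hv2 key]
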